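/- Let (A, A*) be a tridiagonal pair on V with eigenspace orderings V_0, ..., V_d of A and V*_0, ..., V*_d of A*, and let D denote the subalgebra of End(V) generated by A. If there exists a nonzero X ∈ D such that X V*_0 ⊆ V*_d, then the dimension of V over K equals d + 1. -/

import Mathlib

open Polynomial

/-- A tridiagonal pair on `V`, with eigenspace orderings `Ev 0, ..., Ev d` of `A`
(with eigenvalues `θ 0, ..., θ d`) and `Ew 0, ..., Ew d` of `B = A*`
(with eigenvalues `θ' 0, ..., θ' d`).  For indices `i > d` we set `Ev i = ⊥`,
`Ew i = ⊥`, encoding the conventions `V_{-1} = 0`, `V_{d+1} = 0`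
(note `Ev (0 - 1) = Ev 0` by truncated subtraction, which is harmless in the
tridiagonal conditions below since `Ev i` appears in the sum anyway). -/
structure TridiagonalPair (K V : Type*) [Field K] [AddCommGroup V] [Module K V]
    [FiniteDimensional K V] where
  A : Module.End K V
  B : Module.End K V
  d : ℕ
  Ev : ℕ → Submodule K V
  Ew : ℕ → Submodule K V
  θ : ℕ → K
  θ' : ℕ → K
  hEv_eig : ∀ i ≤ d, Ev i = Module.End.eigenspace A (θ i)
  hEv_ne : ∀ i ≤ d, Ev i ≠ ⊥
  hEv_all : ∀ μ : K, Module.End.eigenspace A μ ≠ ⊥ → ∃ i ≤ d, θ i = μ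
  hθ_inj : ∀ i ≤ d, ∀ j ≤ d, θ i = θ j → i = j
  hEv_top : (⨆ i ∈ Finset.range (d + 1), Ev i) = ⊤
  hEv_bot : ∀ i, d < i → Ev i = ⊥
  hEw_eig : ∀ i ≤ d, Ew i = Module.End.eigenspace B (θ' i)
  hEw_ne : ∀ i ≤ d, Ew i ≠ ⊥
  hEw_all : ∀ μ : K, Module.End.eigenspace B μ ≠ ⊥ → ∃ i ≤ d, θ' i = μ
  hθ'_inj : ∀ i ≤ d, ∀ j ≤ d, θ' i = θ' j → i = j
  hEw_top : (⨆ i ∈ Finset.range (d + 1), Ew i) = ⊤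
  hEw_bot : ∀ i, d < i → Ew i = ⊥
  hTriB : ∀ i ≤ d, ∀ v ∈ Ev i, B v ∈ Ev (i - 1) ⊔ Ev i ⊔ Ev (i + 1)
  hTriA : ∀ i ≤ d, ∀ v ∈ Ew i, A v ∈ Ew (i - 1) ⊔ Ew i ⊔ Ew (i + 1)
  hIrr : ∀ W : Submodule K V, (∀ v ∈ W, A v ∈ W) → (∀ v ∈ W, B v ∈ W) →
    W = ⊥ ∨ W = ⊤

/-- The polynomial `τ_i = (λ - θ_0)(λ - θ_1) ⋯ (λ - θ_{i-1})`. -/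
noncomputable def tau {K : Type*} [Field K] (θ : ℕ → K) (i : ℕ) : Polynomial K :=
  ∏ k ∈ Finset.range i, (X - C (θ k))

namespace TridiagonalPair

variable {K V : Type*} [Field K] [AddCommGroup V] [Module K V] [FiniteDimensional K V]
variable (p : TridiagonalPair K V)

/-- `F k = V*_0 + ... + V*_k`. -/
def Ff (k : ℕ) : Submodule K V := (Finset.range (k+1)).sup p.Ew

/-- `G j = V_j + ... + V_d`. -/
def Gg (j : ℕ) : Submodule K V := (Finset.Icc j p.d).sup p.Ev

/-- `H j = V_0 + ... + V_{j-1}`. -/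
def Hh (j : ℕ) : Submodule K V := (Finset.range j).sup p.Ev

/-- `U h = F h ⊓ G h`. -/
def Uu (h : ℕ) : Submodule K V := p.Ff h ⊓ p.Gg h

lemma Ew_le_Ff {i k : ℕ} (h : i ≤ k) : p.Ew i ≤ p.Ff k :=
  Finset.le_sup (Finset.mem_range.mpr (by omega))

lemma Ev_le_Gg {i j : ℕ} (h1 : j ≤ i) (h2 : i ≤ p.d) : p.Ev i ≤ p.Gg j :=
  Finset.le_sup (Finset.mem_Icc.mpr ⟨h1, h2⟩)

lemma Ev_le_Hh {i j : ℕ} (h : i < j) : p.Ev i ≤ p.Hh j :=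
  Finset.le_sup (Finset.mem_range.mpr h)

lemma Ff_mono {k l : ℕ} (h : k ≤ l) : p.Ff k ≤ p.Ff l :=
  Finset.sup_mono (Finset.range_subset_range.mpr (by omega))

lemma Gg_anti {k l : ℕ} (h : k ≤ l) : p.Gg l ≤ p.Gg k :=
  Finset.sup_mono (by intro x hx; simp only [Finset.mem_Icc] at *; omega)

lemma Hh_mono {k l : ℕ} (h : k ≤ l) : p.Hh k ≤ p.Hh l :=
  Finset.sup_mono (Finset.range_subset_range.mpr h)

lemma Ff_zero : p.Ff 0 = p.Ew 0 := by
  simp [Ff, Finset.range_one]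

lemma Gg_zero : p.Gg 0 = ⊤ := by
  have h := p.hEv_top
  rw [Gg, show Finset.Icc 0 p.d = Finset.range (p.d+1) by
    rw [Finset.range_eq_Ico, Finset.Ico_add_one_right_eq_Icc]]
  rw [Finset.sup_eq_iSup]
  exact h

lemma Gg_bot {j : ℕ} (h : p.d < j) : p.Gg j = ⊥ := by
  rw [Gg, Finset.Icc_eq_empty (by omega), Finset.sup_empty]

lemma Hh_zero : p.Hh 0 = ⊥ := by simp [Hh]

lemma B_apply {i : ℕ} (hi : i ≤ p.d) {v : V} (hv : v ∈ p.Ew i) : p.B v = p.θ' i • v := by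
  rw [p.hEw_eig i hi] at hv; exact Module.End.mem_eigenspace_iff.mp hv

lemma A_apply {i : ℕ} (hi : i ≤ p.d) {v : V} (hv : v ∈ p.Ev i) : p.A v = p.θ i • v := by
  rw [p.hEv_eig i hi] at hv; exact Module.End.mem_eigenspace_iff.mp hv

lemma A_Ff (k : ℕ) : p.Ff k ≤ (p.Ff (k+1)).comap p.A := by
  refine Finset.sup_le fun i hi => ?_
  simp only [Finset.mem_range] at hi
  intro v hv
  rw [Submodule.mem_comap]
  by_cases hid : i ≤ p.d
  · have h3 := p.hTriA i hid v hv
    exact (sup_le (sup_le (p.Ew_le_Ff (by omega)) (p.Ew_le_Ff (by omega)))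
      (p.Ew_le_Ff (by omega))) h3
  · rw [p.hEw_bot i (by omega)] at hv
    simp only [Submodule.mem_bot] at hv
    simp [hv]

lemma B_Ff (k : ℕ) : p.Ff k ≤ (p.Ff k).comap p.B := by
  refine Finset.sup_le fun i hi => ?_
  simp only [Finset.mem_range] at hi
  intro v hv
  rw [Submodule.mem_comap]
  by_cases hid : i ≤ p.d
  · rw [p.B_apply hid hv]
    exact (p.Ew_le_Ff (by omega)) (Submodule.smul_mem _ _ hv)
  · rw [p.hEw_bot i (by omega)] at hv
    simp only [Submodule.mem_bot] at hv
    simp [hv]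

lemma B_Ff' (k : ℕ) :
    p.Ff (k+1) ≤ (p.Ff k).comap (p.B - p.θ' (k+1) • (1 : Module.End K V)) := by
  refine Finset.sup_le fun i hi => ?_
  simp only [Finset.mem_range] at hi
  intro v hv
  simp only [Submodule.mem_comap, LinearMap.sub_apply, LinearMap.smul_apply,
    Module.End.one_apply]
  by_cases hid : i ≤ p.d
  · rw [p.B_apply hid hv, ← sub_smul]
    by_cases hik : i ≤ k
    · exact (p.Ew_le_Ff hik) (Submodule.smul_mem _ _ hv)
    · have hik' : i = k+1 := by omega
      subst hik'
      simp
  · rw [p.hEw_bot i (by omega)] at hv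
    simp only [Submodule.mem_bot] at hv
    simp [hv]

lemma A_Gg (j : ℕ) : p.Gg j ≤ (p.Gg j).comap p.A := by
  refine Finset.sup_le fun i hi => ?_
  simp only [Finset.mem_Icc] at hi
  intro v hv
  rw [Submodule.mem_comap, p.A_apply hi.2 hv]
  exact p.Ev_le_Gg hi.1 hi.2 (Submodule.smul_mem _ _ hv)

lemma A_Gg' (j : ℕ) :
    p.Gg j ≤ (p.Gg (j+1)).comap (p.A - p.θ j • (1 : Module.End K V)) := by
  refine Finset.sup_le fun i hi => ?_
  simp only [Finset.mem_Icc] at hi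
  intro v hv
  simp only [Submodule.mem_comap, LinearMap.sub_apply, LinearMap.smul_apply,
    Module.End.one_apply]
  rw [p.A_apply hi.2 hv, ← sub_smul]
  rcases Nat.eq_or_lt_of_le hi.1 with h | h
  · rw [← h]; simp
  · exact p.Ev_le_Gg h hi.2 (Submodule.smul_mem _ _ hv)

lemma B_Gg (j : ℕ) : p.Gg (j+1) ≤ (p.Gg j).comap p.B := by
  refine Finset.sup_le fun i hi => ?_
  simp only [Finset.mem_Icc] at hi
  intro v hv
  rw [Submodule.mem_comap]
  have h3 := p.hTriB i hi.2 v hv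
  have hle : p.Ev (i-1) ⊔ p.Ev i ⊔ p.Ev (i+1) ≤ p.Gg j := by
    refine sup_le (sup_le ?_ ?_) ?_
    · exact p.Ev_le_Gg (by omega) (by omega)
    · exact p.Ev_le_Gg (by omega) hi.2
    · by_cases hd : i+1 ≤ p.d
      · exact p.Ev_le_Gg (by omega) hd
      · rw [p.hEv_bot (i+1) (by omega)]; exact bot_le
  exact hle h3

lemma B_Hh (j : ℕ) : p.Hh j ≤ (p.Hh (j+1)).comap p.B := by
  refine Finset.sup_le fun i hi => ?_
  simp only [Finset.mem_range] at hi
  intro v hv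
  rw [Submodule.mem_comap]
  by_cases hid : i ≤ p.d
  · have h3 := p.hTriB i hid v hv
    exact (sup_le (sup_le (p.Ev_le_Hh (by omega)) (p.Ev_le_Hh (by omega)))
      (p.Ev_le_Hh (by omega))) h3
  · rw [p.hEv_bot i (by omega)] at hv
    simp only [Submodule.mem_bot] at hv
    simp [hv]

lemma A_Hh (j : ℕ) : p.Hh j ≤ (p.Hh j).comap p.A := by
  refine Finset.sup_le fun i hi => ?_
  simp only [Finset.mem_range] at hi
  intro v hv
  rw [Submodule.mem_comap]
  by_cases hid : i ≤ p.d
  · rw [p.A_apply hid hv]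
    exact (p.Ev_le_Hh (by omega)) (Submodule.smul_mem _ _ hv)
  · rw [p.hEv_bot i (by omega)] at hv
    simp only [Submodule.mem_bot] at hv
    simp [hv]

lemma A_Hh' (j : ℕ) :
    p.Hh (j+1) ≤ (p.Hh j).comap (p.A - p.θ j • (1 : Module.End K V)) := by
  refine Finset.sup_le fun i hi => ?_
  simp only [Finset.mem_range] at hi
  intro v hv
  simp only [Submodule.mem_comap, LinearMap.sub_apply, LinearMap.smul_apply,
    Module.End.one_apply]
  by_cases hid : i ≤ p.d
  · rw [p.A_apply hid hv, ← sub_smul]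
    rcases Nat.lt_or_ge i j with h | h
    · exact p.Ev_le_Hh h (Submodule.smul_mem _ _ hv)
    · have : i = j := by omega
      subst this; simp
  · rw [p.hEv_bot i (by omega)] at hv
    simp only [Submodule.mem_bot] at hv
    simp [hv]

end TridiagonalPair

namespace TridiagonalPair

variable {K V : Type*} [Field K] [AddCommGroup V] [Module K V] [FiniteDimensional K V]
variable (p : TridiagonalPair K V)

lemma Ev_inf_Gg : p.Ev 0 ⊓ p.Gg 1 = ⊥ := by
  rw [eq_bot_iff]
  rintro v ⟨hv0, hvG⟩
  simp only [Submodule.mem_bot]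
  have key : ∀ k : ℕ, (∏ j ∈ Finset.Icc 1 k, (p.θ 0 - p.θ j)) • v ∈ p.Gg (k+1) := by
    intro k
    induction k with
    | zero => simpa using hvG
    | succ n ih =>
      have h2 := p.A_Gg' (n+1) ih
      simp only [Submodule.mem_comap, LinearMap.sub_apply, LinearMap.smul_apply,
        Module.End.one_apply, map_smul] at h2
      rw [p.A_apply (Nat.zero_le _) hv0, smul_sub, smul_smul, smul_smul, ← sub_smul] at h2
      have heq : (∏ j ∈ Finset.Icc 1 (n+1), (p.θ 0 - p.θ j))
          = (∏ j ∈ Finset.Icc 1 n, (p.θ 0 - p.θ j)) * p.θ 0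
            - (∏ j ∈ Finset.Icc 1 n, (p.θ 0 - p.θ j)) * p.θ (n+1) := by
        rw [Finset.prod_Icc_succ_top (by omega)]; ring
      rw [heq]
      exact h2
  have hfin := key p.d
  rw [p.Gg_bot (by omega), Submodule.mem_bot] at hfin
  rcases smul_eq_zero.mp hfin with h | h
  · exfalso
    have : ∀ j ∈ Finset.Icc 1 p.d, p.θ 0 - p.θ j ≠ 0 := by
      intro j hj hz
      simp only [Finset.mem_Icc] at hj
      have := p.hθ_inj 0 (by omega) j (by omega) (sub_eq_zero.mp hz)
      omega
    exact (Finset.prod_ne_zero_iff.mpr this) h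
  · exact h

lemma Evd_inf_Hh : p.Ev p.d ⊓ p.Hh p.d = ⊥ := by
  rw [eq_bot_iff]
  rintro v ⟨hv0, hvH⟩
  simp only [Submodule.mem_bot]
  have key : ∀ k : ℕ, k ≤ p.d →
      (∏ j ∈ Finset.Ico (p.d - k) p.d, (p.θ p.d - p.θ j)) • v ∈ p.Hh (p.d - k) := by
    intro k
    induction k with
    | zero => intro _; simpa using hvH
    | succ n ih =>
      intro hk
      have ihn := ih (by omega)
      have hrw : p.d - n = (p.d - (n+1)) + 1 := by omega
      rw [hrw] at ihn
      have h2 := p.A_Hh' (p.d - (n+1)) ihn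
      simp only [Submodule.mem_comap, LinearMap.sub_apply, LinearMap.smul_apply,
        Module.End.one_apply, map_smul] at h2
      rw [p.A_apply (le_refl p.d) hv0, smul_sub, smul_smul, smul_smul, ← sub_smul] at h2
      have heq : (∏ j ∈ Finset.Ico (p.d - (n+1)) p.d, (p.θ p.d - p.θ j))
          = (∏ j ∈ Finset.Ico (p.d - (n+1) + 1) p.d, (p.θ p.d - p.θ j)) * p.θ p.d
            - (∏ j ∈ Finset.Ico (p.d - (n+1) + 1) p.d, (p.θ p.d - p.θ j)) * p.θ (p.d - (n+1)) := by
        rw [Finset.prod_eq_prod_Ico_succ_bot (by omega : p.d - (n+1) < p.d)]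
        ring
      rw [heq]
      exact h2
  have hfin := key p.d (le_refl _)
  rw [Nat.sub_self, p.Hh_zero, Submodule.mem_bot] at hfin
  rcases smul_eq_zero.mp hfin with h | h
  · exfalso
    have : ∀ j ∈ Finset.Ico 0 p.d, p.θ p.d - p.θ j ≠ 0 := by
      intro j hj hz
      simp only [Finset.mem_Ico] at hj
      have := p.hθ_inj p.d (le_refl _) j (by omega) (sub_eq_zero.mp hz)
      omega
    exact (Finset.prod_ne_zero_iff.mpr this) h
  · exact h

lemma Z1 (i : ℕ) : p.Ff i ⊓ p.Gg (i+1) = ⊥ := by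
  set W : Submodule K V := ⨆ h : ℕ, (p.Ff h ⊓ p.Gg (h+1)) with hWdef
  have hterm : ∀ h, p.Ff h ⊓ p.Gg (h+1) ≤ W := fun h => le_iSup (fun h => p.Ff h ⊓ p.Gg (h+1)) h
  have hA : ∀ v ∈ W, p.A v ∈ W := by
    intro v hv
    refine Submodule.iSup_induction (motive := fun v => p.A v ∈ W) _ hv ?_ (by simp) ?_
    · rintro h x ⟨hxF, hxG⟩
      have h1 : p.A x - p.θ (h+1) • x ∈ p.Ff (h+1) ⊓ p.Gg (h+2) := by
        constructor
        · exact Submodule.sub_mem _ (p.A_Ff h hxF) (p.Ff_mono (by omega) (Submodule.smul_mem _ _ hxF))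
        · have := p.A_Gg' (h+1) hxG
          simp only [Submodule.mem_comap, LinearMap.sub_apply, LinearMap.smul_apply,
            Module.End.one_apply] at this; exact this
      have h2 : p.θ (h+1) • x ∈ p.Ff h ⊓ p.Gg (h+1) :=
        ⟨Submodule.smul_mem _ _ hxF, Submodule.smul_mem _ _ hxG⟩
      have : p.A x = (p.A x - p.θ (h+1) • x) + p.θ (h+1) • x := by abel
      rw [this]
      exact Submodule.add_mem _ (hterm (h+1) h1) (hterm h h2)
    · intro x y hx hy
      rw [map_add]
      exact Submodule.add_mem _ hx hy
  have hB : ∀ v ∈ W, p.B v ∈ W := by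
    intro v hv
    refine Submodule.iSup_induction (motive := fun v => p.B v ∈ W) _ hv ?_ (by simp) ?_
    · rintro h x ⟨hxF, hxG⟩
      cases h with
      | zero =>
        have hx0 : x ∈ p.Ew 0 := by rwa [p.Ff_zero] at hxF
        rw [p.B_apply (Nat.zero_le _) hx0]
        exact hterm 0 ⟨Submodule.smul_mem _ _ hxF, Submodule.smul_mem _ _ hxG⟩
      | succ n =>
        have h1 : p.B x - p.θ' (n+1) • x ∈ p.Ff n ⊓ p.Gg (n+1) := by
          constructor
          · have := p.B_Ff' n hxF
            simp only [Submodule.mem_comap, LinearMap.sub_apply, LinearMap.smul_apply,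
              Module.End.one_apply] at this; exact this
          · exact Submodule.sub_mem _ (p.B_Gg (n+1) hxG)
              (p.Gg_anti (by omega) (Submodule.smul_mem _ _ hxG))
        have h2 : p.θ' (n+1) • x ∈ p.Ff (n+1) ⊓ p.Gg (n+2) :=
          ⟨Submodule.smul_mem _ _ hxF, Submodule.smul_mem _ _ hxG⟩
        have : p.B x = (p.B x - p.θ' (n+1) • x) + p.θ' (n+1) • x := by abel
        rw [this]
        exact Submodule.add_mem _ (hterm n h1) (hterm (n+1) h2)
    · intro x y hx hy
      rw [map_add]
      exact Submodule.add_mem _ hx hy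
  rcases p.hIrr W hA hB with h | h
  · rw [eq_bot_iff, ← h]
    exact hterm i
  · exfalso
    obtain ⟨v, hvmem, hvne⟩ := Submodule.ne_bot_iff _ |>.mp (p.hEv_ne 0 (Nat.zero_le _))
    have hWG : W ≤ p.Gg 1 := by
      refine iSup_le fun h => ?_
      exact inf_le_right.trans (p.Gg_anti (by omega))
    have : v ∈ p.Ev 0 ⊓ p.Gg 1 := ⟨hvmem, hWG (by rw [h]; trivial)⟩
    rw [p.Ev_inf_Gg, Submodule.mem_bot] at this
    exact hvne this

lemma Z3 : p.Ew 0 ⊓ p.Hh p.d = ⊥ := by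
  set W : Submodule K V := ⨆ h : ℕ, (p.Ff h ⊓ p.Hh (p.d - h)) with hWdef
  have hterm : ∀ h, p.Ff h ⊓ p.Hh (p.d - h) ≤ W :=
    fun h => le_iSup (fun h => p.Ff h ⊓ p.Hh (p.d - h)) h
  have hA : ∀ v ∈ W, p.A v ∈ W := by
    intro v hv
    refine Submodule.iSup_induction (motive := fun v => p.A v ∈ W) _ hv ?_ (by simp) ?_
    · rintro h x ⟨hxF, hxH⟩
      by_cases hd : p.d - h = 0
      · rw [hd, p.Hh_zero] at hxH
        have hx0 : x = 0 := by simpa using hxH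
        subst hx0; simp
      · obtain ⟨m, hm⟩ : ∃ m, p.d - h = m + 1 := ⟨p.d - h - 1, by omega⟩
        rw [hm] at hxH
        have h1 : p.A x - p.θ m • x ∈ p.Ff (h+1) ⊓ p.Hh (p.d - (h+1)) := by
          constructor
          · exact Submodule.sub_mem _ (p.A_Ff h hxF)
              (p.Ff_mono (by omega) (Submodule.smul_mem _ _ hxF))
          · have := p.A_Hh' m hxH
            simp only [Submodule.mem_comap, LinearMap.sub_apply, LinearMap.smul_apply,
              Module.End.one_apply] at this
            have hmm : m = p.d - (h+1) := by omega
            rw [← hmm]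
            exact this
        have h2 : p.θ m • x ∈ p.Ff h ⊓ p.Hh (p.d - h) := by
          refine ⟨Submodule.smul_mem _ _ hxF, ?_⟩
          rw [hm]; exact Submodule.smul_mem _ _ hxH
        have : p.A x = (p.A x - p.θ m • x) + p.θ m • x := by abel
        rw [this]
        exact Submodule.add_mem _ (hterm (h+1) h1) (hterm h h2)
    · intro x y hx hy
      rw [map_add]
      exact Submodule.add_mem _ hx hy
  have hB : ∀ v ∈ W, p.B v ∈ W := by
    intro v hv
    refine Submodule.iSup_induction (motive := fun v => p.B v ∈ W) _ hv ?_ (by simp) ?_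
    · rintro h x ⟨hxF, hxH⟩
      by_cases hhd : h ≤ p.d
      · cases h with
        | zero =>
          have hx0 : x ∈ p.Ew 0 := by rwa [p.Ff_zero] at hxF
          rw [p.B_apply (Nat.zero_le _) hx0]
          exact hterm 0 ⟨Submodule.smul_mem _ _ hxF, Submodule.smul_mem _ _ hxH⟩
        | succ n =>
          have h1 : p.B x - p.θ' (n+1) • x ∈ p.Ff n ⊓ p.Hh (p.d - n) := by
            constructor
            · have := p.B_Ff' n hxF
              simp only [Submodule.mem_comap, LinearMap.sub_apply, LinearMap.smul_apply,
                Module.End.one_apply] at this; exact this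
            · have hBx : p.B x ∈ p.Hh (p.d - (n+1) + 1) := p.B_Hh _ hxH
              have hr : p.d - (n+1) + 1 = p.d - n := by omega
              rw [hr] at hBx
              exact Submodule.sub_mem _ hBx
                (p.Hh_mono (by omega) (Submodule.smul_mem _ _ hxH))
          have h2 : p.θ' (n+1) • x ∈ p.Ff (n+1) ⊓ p.Hh (p.d - (n+1)) :=
            ⟨Submodule.smul_mem _ _ hxF, Submodule.smul_mem _ _ hxH⟩
          have : p.B x = (p.B x - p.θ' (n+1) • x) + p.θ' (n+1) • x := by abel
          rw [this]
          exact Submodule.add_mem _ (hterm n h1) (hterm (n+1) h2)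
      · have : p.d - h = 0 := by omega
        rw [this, p.Hh_zero] at hxH
        have hx0 : x = 0 := by simpa using hxH
        subst hx0; simp
    · intro x y hx hy
      rw [map_add]
      exact Submodule.add_mem _ hx hy
  rcases p.hIrr W hA hB with h | h
  · rw [eq_bot_iff, ← h]
    have := hterm 0
    rwa [p.Ff_zero, Nat.sub_zero] at this
  · exfalso
    obtain ⟨v, hvmem, hvne⟩ := Submodule.ne_bot_iff _ |>.mp (p.hEv_ne p.d (le_refl _))
    have hWH : W ≤ p.Hh p.d := by
      refine iSup_le fun h => ?_
      exact inf_le_right.trans (p.Hh_mono (by omega))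
    have : v ∈ p.Ev p.d ⊓ p.Hh p.d := ⟨hvmem, hWH (by rw [h]; trivial)⟩
    rw [p.Evd_inf_Hh, Submodule.mem_bot] at this
    exact hvne this

lemma Uu_direct (n : ℕ) (y : ℕ → V) (hy : ∀ ℓ, y ℓ ∈ p.Uu ℓ)
    (hsum : ∑ ℓ ∈ Finset.range n, y ℓ = 0) : ∀ ℓ < n, y ℓ = 0 := by
  induction n with
  | zero => intro ℓ hℓ; omega
  | succ n ih =>
    rw [Finset.sum_range_succ] at hsum
    have hyn : y n = 0 := by
      cases n with
      | zero => simpa using hsum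
      | succ m =>
        have h1 : ∑ ℓ ∈ Finset.range (m+1), y ℓ ∈ p.Ff m := by
          refine Submodule.sum_mem _ fun ℓ hℓ => ?_
          simp only [Finset.mem_range] at hℓ
          exact p.Ff_mono (by omega) (hy ℓ).1
        have h2 : y (m+1) ∈ p.Ff m ⊓ p.Gg (m+1) := by
          refine Submodule.mem_inf.mpr ⟨?_, (hy (m+1)).2⟩
          have hyy : y (m+1) = -∑ ℓ ∈ Finset.range (m+1), y ℓ :=
            eq_neg_of_add_eq_zero_right hsum
          rw [hyy]
          exact Submodule.neg_mem _ h1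
        rw [p.Z1 m, Submodule.mem_bot] at h2
        exact h2
    intro ℓ hℓ
    rcases Nat.lt_or_ge ℓ n with h | h
    · rw [hyn, add_zero] at hsum
      exact ih hsum ℓ h
    · have : ℓ = n := by omega
      rw [this]; exact hyn

end TridiagonalPair

namespace TridiagonalPair

variable {K V : Type*} [Field K] [AddCommGroup V] [Module K V] [FiniteDimensional K V]
variable (p : TridiagonalPair K V)

lemma tau_succ (θ : ℕ → K) (n : ℕ) : tau θ (n+1) = tau θ n * (X - C (θ n)) :=
  Finset.prod_range_succ _ _

lemma tau_zero (θ : ℕ → K) : tau θ 0 = 1 := Finset.prod_range_zero _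

lemma tau_monic (θ : ℕ → K) (n : ℕ) : (tau θ n).Monic :=
  monic_prod_of_monic _ _ fun k _ => monic_X_sub_C _

lemma tau_natDegree (θ : ℕ → K) (n : ℕ) : (tau θ n).natDegree = n := by
  rw [tau, natDegree_prod_of_monic _ _ fun k _ => monic_X_sub_C _]
  simp [natDegree_X_sub_C]

lemma tau_degree (θ : ℕ → K) (n : ℕ) : (tau θ n).degree = n := by
  rw [Polynomial.degree_eq_natDegree (tau_monic θ n).ne_zero, tau_natDegree]

/-- The key step identity: `τ_{n+1}(A) u = (A - θ_n) (τ_n(A) u)`. -/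
lemma tau_step (u : V) (n : ℕ) :
    (aeval p.A (tau p.θ (n+1))) u
      = p.A ((aeval p.A (tau p.θ n)) u) - p.θ n • (aeval p.A (tau p.θ n)) u := by
  rw [tau_succ, mul_comm, map_mul]
  simp only [map_sub, aeval_X, aeval_C, Module.End.mul_apply, LinearMap.sub_apply,
    Algebra.algebraMap_eq_smul_one, LinearMap.smul_apply, Module.End.one_apply]

lemma w_mem {u : V} (hu : u ∈ p.Ew 0) (h : ℕ) :
    (aeval p.A (tau p.θ h)) u ∈ p.Uu h := by
  induction h with
  | zero =>
    rw [tau_zero]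
    simp only [map_one, Module.End.one_apply]
    refine Submodule.mem_inf.mpr ⟨?_, ?_⟩
    · rw [p.Ff_zero]; exact hu
    · rw [p.Gg_zero]; trivial
  | succ n ih =>
    obtain ⟨ihF, ihG⟩ := Submodule.mem_inf.mp ih
    rw [p.tau_step]
    refine Submodule.mem_inf.mpr ⟨?_, ?_⟩
    · exact Submodule.sub_mem _ (p.A_Ff n ihF)
        (p.Ff_mono (by omega) (Submodule.smul_mem _ _ ihF))
    · have := p.A_Gg' n ihG
      simpa only [Submodule.mem_comap, LinearMap.sub_apply, LinearMap.smul_apply,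
        Module.End.one_apply] using this

lemma L_Uu (h : ℕ) {w : V} (hw : w ∈ p.Uu (h+1)) :
    p.B w - p.θ' (h+1) • w ∈ p.Uu h := by
  obtain ⟨hwF, hwG⟩ := Submodule.mem_inf.mp hw
  refine Submodule.mem_inf.mpr ⟨?_, ?_⟩
  · have := p.B_Ff' h hwF
    simpa only [Submodule.mem_comap, LinearMap.sub_apply, LinearMap.smul_apply,
      Module.End.one_apply] using this
  · exact Submodule.sub_mem _ (p.B_Gg h hwG)
      (p.Gg_anti (by omega) (Submodule.smul_mem _ _ hwG))

lemma tau_ann : aeval p.A (tau p.θ (p.d+1)) = 0 := by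
  have hle : (⊤ : Submodule K V) ≤ LinearMap.ker (aeval p.A (tau p.θ (p.d+1))) := by
    rw [← p.hEv_top]
    refine iSup_le fun i => iSup_le fun hi => ?_
    intro v hv
    simp only [Finset.mem_range] at hi
    simp only [LinearMap.mem_ker]
    have hfac : tau p.θ (p.d+1)
        = (∏ k ∈ (Finset.range (p.d+1)).erase i, (X - C (p.θ k))) * (X - C (p.θ i)) := by
      rw [tau, ← Finset.prod_erase_mul _ _ (Finset.mem_range.mpr hi)]
    rw [hfac, map_mul, Module.End.mul_apply]
    have : (aeval p.A (X - C (p.θ i))) v = 0 := by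
      simp only [map_sub, aeval_X, aeval_C, LinearMap.sub_apply,
        Algebra.algebraMap_eq_smul_one, LinearMap.smul_apply, Module.End.one_apply]
      rw [p.A_apply (by omega) hv, sub_self]
    rw [this, map_zero]
  ext v
  simp only [LinearMap.zero_apply]
  exact LinearMap.mem_ker.mp (hle (by trivial : v ∈ (⊤ : Submodule K V)))

lemma tau_span (θ : ℕ → K) : ∀ (n : ℕ) (f : K[X]), f.degree < (n : ℕ) →
    ∃ c : ℕ → K, f = ∑ h ∈ Finset.range n, C (c h) * tau θ h := by
  intro n
  induction n with
  | zero =>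
    intro f hf
    refine ⟨fun _ => 0, ?_⟩
    have : f = 0 := by
      rw [← degree_eq_bot]
      exact Nat.WithBot.lt_zero_iff.mp (by exact_mod_cast hf)
    simp [this]
  | succ n ih =>
    intro f hf
    set a := f.coeff n with ha
    have hg : (f - C a * tau θ n).degree < (n : ℕ) := by
      rw [degree_lt_iff_coeff_zero]
      intro m hm
      simp only [coeff_sub, coeff_C_mul]
      rcases Nat.eq_or_lt_of_le hm with h | h
      · rw [← h]
        have hmc : (tau θ n).coeff n = 1 := by
          have := (tau_monic θ n).coeff_natDegree
          rwa [tau_natDegree] at this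
        rw [hmc, ha, mul_one, sub_self]
      · have h1 : f.coeff m = 0 := by
          have := (degree_lt_iff_coeff_zero f (n+1)).mp (by exact_mod_cast hf)
          exact this m (by exact_mod_cast h)
        have h2 : (tau θ n).coeff m = 0 :=
          coeff_eq_zero_of_natDegree_lt (by rw [tau_natDegree]; omega)
        rw [h1, h2, mul_zero, sub_self]
    obtain ⟨c, hc⟩ := ih _ hg
    refine ⟨Function.update c n a, ?_⟩
    rw [Finset.sum_range_succ]
    have hcong : ∀ h ∈ Finset.range n,
        C (Function.update c n a h) * tau θ h = C (c h) * tau θ h := by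
      intro h hh
      simp only [Finset.mem_range] at hh
      rw [Function.update_of_ne (by omega)]
    rw [Finset.sum_congr rfl hcong, ← hc, Function.update_self]
    ring

lemma tau_eigen {i : ℕ} (hi : i ≤ p.d) {v : V} (hv : v ∈ p.Ev i) (n : ℕ) :
    (aeval p.A (tau p.θ n)) v = (∏ k ∈ Finset.range n, (p.θ i - p.θ k)) • v := by
  induction n with
  | zero => simp [tau_zero]
  | succ n ih =>
    rw [p.tau_step, ih, map_smul, p.A_apply hi hv, Finset.prod_range_succ]
    rw [smul_smul, smul_smul, ← sub_smul]
    congr 1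
    ring

lemma tau_Hh {j : ℕ} {x : V} (hx : x ∈ p.Hh j) (n : ℕ) :
    (aeval p.A (tau p.θ n)) x ∈ p.Hh j := by
  induction n with
  | zero => simpa [tau_zero] using hx
  | succ n ih =>
    rw [p.tau_step]
    exact Submodule.sub_mem _ (p.A_Hh j ih) (Submodule.smul_mem _ _ ih)

end TridiagonalPair

namespace TridiagonalPair

variable {K V : Type*} [Field K] [AddCommGroup V] [Module K V] [FiniteDimensional K V]
variable (p : TridiagonalPair K V)

lemma cascade (c : ℕ → K) (X : Module.End K V)
    (hXr : aeval p.A (∑ h ∈ Finset.range (p.d+1), C (c h) * tau p.θ h) = X)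
    (hXV : ∀ v ∈ p.Ew 0, X v ∈ p.Ew p.d) :
    ∀ ℓ < p.d, ∀ u ∈ p.Ew 0,
      c (ℓ+1) • (p.B ((aeval p.A (tau p.θ (ℓ+1))) u)
          - p.θ' (ℓ+1) • (aeval p.A (tau p.θ (ℓ+1))) u)
        = ((p.θ' p.d - p.θ' ℓ) * c ℓ) • (aeval p.A (tau p.θ ℓ)) u := by
  intro ℓ hℓ u hu
  set w : ℕ → V := fun h => (aeval p.A (tau p.θ h)) u with hwdef
  have hw0 : w 0 = u := by simp [hwdef, tau_zero]
  have hXu : X u = ∑ h ∈ Finset.range (p.d+1), c h • w h := by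
    rw [← hXr, map_sum, LinearMap.sum_apply]
    refine Finset.sum_congr rfl fun h _ => ?_
    rw [map_mul, aeval_C, Algebra.algebraMap_eq_smul_one]
    simp [Module.End.mul_apply, smul_mul_assoc]
    rfl
  have hB : p.B (X u) = p.θ' p.d • X u := p.B_apply (le_refl _) (hXV u hu)
  set y : ℕ → V := fun m => c (m+1) • (p.B (w (m+1)) - p.θ' (m+1) • w (m+1))
      + ((p.θ' m - p.θ' p.d) * c m) • w m with hydef
  have hy : ∀ m, y m ∈ p.Uu m := by
    intro m
    refine Submodule.add_mem _ ?_ ?_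
    · exact Submodule.smul_mem _ _ (p.L_Uu m (p.w_mem hu (m+1)))
    · exact Submodule.smul_mem _ _ (p.w_mem hu m)
  have hsum : ∑ m ∈ Finset.range p.d, y m = 0 := by
    have e1 : ∑ m ∈ Finset.range p.d, y m
        = ∑ h ∈ Finset.range (p.d+1),
            (c h • (p.B (w h) - p.θ' h • w h) + ((p.θ' h - p.θ' p.d) * c h) • w h) := by
      rw [Finset.sum_add_distrib, Finset.sum_add_distrib]
      congr 1
      · rw [Finset.sum_range_succ' (fun h => c h • (p.B (w h) - p.θ' h • w h)) p.d]
        have h0 : c 0 • (p.B (w 0) - p.θ' 0 • w 0) = 0 := by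
          rw [hw0, p.B_apply (Nat.zero_le _) hu, sub_self, smul_zero]
        rw [h0, add_zero]
      · rw [Finset.sum_range_succ]
        have h0 : ((p.θ' p.d - p.θ' p.d) * c p.d) • w p.d = 0 := by
          rw [sub_self, zero_mul, zero_smul]
        rw [h0, add_zero]
    rw [e1]
    have e2 : ∀ h ∈ Finset.range (p.d+1),
        (c h • (p.B (w h) - p.θ' h • w h) + ((p.θ' h - p.θ' p.d) * c h) • w h)
          = c h • p.B (w h) - (p.θ' p.d * c h) • w h := by
      intro h _
      module
    rw [Finset.sum_congr rfl e2, Finset.sum_sub_distrib]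
    have e3 : ∑ h ∈ Finset.range (p.d+1), c h • p.B (w h)
        = p.B (∑ h ∈ Finset.range (p.d+1), c h • w h) := by
      rw [map_sum]
      exact Finset.sum_congr rfl fun h _ => (map_smul _ _ _).symm
    have e4 : ∑ h ∈ Finset.range (p.d+1), (p.θ' p.d * c h) • w h
        = p.θ' p.d • ∑ h ∈ Finset.range (p.d+1), c h • w h := by
      rw [Finset.smul_sum]
      exact Finset.sum_congr rfl fun h _ => by rw [smul_smul]
    rw [e3, e4, ← hXu, hB, sub_self]
  have h0 : y ℓ = 0 := p.Uu_direct p.d y hy hsum ℓ hℓ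
  have h1 : c (ℓ+1) • (p.B (w (ℓ+1)) - p.θ' (ℓ+1) • w (ℓ+1))
      = -(((p.θ' ℓ - p.θ' p.d) * c ℓ) • w ℓ) := eq_neg_of_add_eq_zero_left h0
  rw [h1, ← neg_smul]
  congr 1
  ring

end TridiagonalPair


/-- If there exists a nonzero `X ∈ D` with `X V*_0 ⊆ V*_d`, then
`dim V = d + 1`. -/
theorem stmt12 {K V : Type*} [Field K] [AddCommGroup V] [Module K V]
    [FiniteDimensional K V] (hpos : 0 < Module.finrank K V)
    (p : TridiagonalPair K V)
    (X : Module.End K V) (hX : X ∈ Algebra.adjoin K {p.A}) (hX0 : X ≠ 0)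
    (hXV : ∀ v ∈ p.Ew 0, X v ∈ p.Ew p.d) :
    Module.finrank K V = p.d + 1 := by
  classical
  -- Lower bound: the d+1 eigenspaces of A are nonzero with distinct eigenvalues.
  have hlow : p.d + 1 ≤ Module.finrank K V := by
    have hev : ∀ i : Fin (p.d+1), ∃ v : V, v ∈ p.Ev i ∧ v ≠ 0 := by
      intro i
      obtain ⟨v, hv, hv0⟩ := Submodule.ne_bot_iff _ |>.mp (p.hEv_ne i (by omega))
      exact ⟨v, hv, hv0⟩
    choose v hv hv0 using hev
    have hli : LinearIndependent K v := by
      refine Module.End.eigenvectors_linearIndependent' p.A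
        (fun i : Fin (p.d+1) => p.θ i) ?_ v ?_
      · intro i j hij
        exact Fin.ext (p.hθ_inj i (by omega) j (by omega) hij)
      · intro i
        refine ⟨?_, hv0 i⟩
        have := hv i
        rwa [p.hEv_eig i (by omega)] at this
    have := hli.fintype_card_le_finrank
    simpa using this
  -- Get a polynomial representative of X of degree ≤ d.
  obtain ⟨f, hf⟩ : ∃ f : Polynomial K, aeval p.A f = X := by
    rw [Algebra.adjoin_singleton_eq_range_aeval] at hX
    exact hX
  set r := f %ₘ (tau p.θ (p.d+1)) with hrdef
  have hmon := TridiagonalPair.tau_monic p.θ (p.d+1)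
  have hXr : aeval p.A r = X := by
    conv_rhs => rw [← hf, ← Polynomial.modByMonic_add_div f (tau p.θ (p.d+1))]
    rw [map_add, map_mul, p.tau_ann, zero_mul, add_zero]
  have hrdeg : r.degree < ((p.d+1 : ℕ) : WithBot ℕ) := by
    have h1 := Polynomial.degree_modByMonic_lt f hmon
    rwa [TridiagonalPair.tau_degree] at h1
  obtain ⟨c, hc⟩ := TridiagonalPair.tau_span p.θ (p.d+1) r hrdeg
  have hXr' : aeval p.A (∑ h ∈ Finset.range (p.d+1), Polynomial.C (c h) * tau p.θ h) = X := by
    rw [← hc]; exact hXr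
  have hcas := p.cascade c X hXr' hXV
  -- notation
  by_cases hall : ∀ h ≤ p.d, ∃ u ∈ p.Ew 0, (aeval p.A (tau p.θ h)) u ≠ 0
  · -- Case I.
    -- The set of indices with nonzero coefficient.
    have hcne : ∃ h ∈ Finset.range (p.d+1), c h ≠ 0 := by
      by_contra hno
      push_neg at hno
      apply hX0
      rw [← hXr']
      have : ∀ h ∈ Finset.range (p.d+1), Polynomial.C (c h) * tau p.θ h = 0 := by
        intro h hh; rw [hno h hh]; simp
      rw [Finset.sum_congr rfl this]
      simp
    set Pset := (Finset.range (p.d+1)).filter (fun h => c h ≠ 0) with hPset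
    have hPne : Pset.Nonempty := by
      obtain ⟨h, hh, hch⟩ := hcne
      exact ⟨h, Finset.mem_filter.mpr ⟨hh, hch⟩⟩
    set m := Pset.min' hPne with hm
    have hmmem : m ∈ Pset := Finset.min'_mem _ _
    have hmd : m ≤ p.d := by
      have := (Finset.mem_filter.mp hmmem).1
      simp only [Finset.mem_range] at this
      omega
    have hcm : c m ≠ 0 := (Finset.mem_filter.mp hmmem).2
    have hmmin : ∀ k < m, c k = 0 := by
      intro k hk
      by_contra hck
      have hkP : k ∈ Pset := Finset.mem_filter.mpr ⟨Finset.mem_range.mpr (by omega), hck⟩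
      have := Finset.min'_le Pset k hkP
      omega
    -- coefficients are nonzero on [m, d]
    have hup : ∀ h, m ≤ h → h ≤ p.d → c h ≠ 0 := by
      intro h hmh
      induction h, hmh using Nat.le_induction with
      | base => intro _; exact hcm
      | succ n hn ih =>
        intro hnd
        have hcn : c n ≠ 0 := ih (by omega)
        intro hcn1
        obtain ⟨u, hu, hwu⟩ := hall n (by omega)
        have := hcas n (by omega) u hu
        rw [hcn1, zero_smul] at this
        have hscal : (p.θ' p.d - p.θ' n) * c n ≠ 0 := by
          refine mul_ne_zero ?_ hcn
          intro hz
          have := p.hθ'_inj p.d (le_refl _) n (by omega) (sub_eq_zero.mp hz)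
          omega
        rcases smul_eq_zero.mp this.symm with h' | h'
        · exact hscal h'
        · exact hwu h'
    obtain ⟨u, hu, hwm⟩ := hall m hmd
    set w : ℕ → V := fun h => (aeval p.A (tau p.θ h)) u with hwdef
    set S := (Finset.Icc m p.d).image w with hS
    set W := Submodule.span K (S : Set V) with hW
    have hgen : ∀ h, m ≤ h → h ≤ p.d → w h ∈ W := by
      intro h h1 h2
      exact Submodule.subset_span (Finset.mem_coe.mpr
        (Finset.mem_image.mpr ⟨h, Finset.mem_Icc.mpr ⟨h1, h2⟩, rfl⟩))
    have hAw : ∀ h, p.A (w h) = w (h+1) + p.θ h • w h := by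
      intro h
      have := p.tau_step u h
      rw [show (aeval p.A (tau p.θ (h+1))) u = w (h+1) from rfl] at this
      rw [this]
      abel
    have hwd1 : w (p.d+1) = 0 := by
      simp only [hwdef]
      rw [p.tau_ann]
      simp
    have hAinv : ∀ x ∈ W, p.A x ∈ W := by
      intro x hx
      refine Submodule.span_induction ?_ ?_ ?_ ?_ hx
      · intro z hz
        obtain ⟨h, hh, rfl⟩ := Finset.mem_image.mp (Finset.mem_coe.mp hz)
        simp only [Finset.mem_Icc] at hh
        rw [hAw h]
        rcases Nat.eq_or_lt_of_le hh.2 with hhd | hhd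
        · rw [hhd, hwd1, zero_add]
          exact Submodule.smul_mem _ _ (hgen p.d (by omega) (le_refl _))
        · exact Submodule.add_mem _ (hgen (h+1) (by omega) (by omega))
            (Submodule.smul_mem _ _ (hgen h hh.1 hh.2))
      · simp
      · intro a b _ _ ha hb
        rw [map_add]; exact Submodule.add_mem _ ha hb
      · intro t a _ ha
        rw [map_smul]; exact Submodule.smul_mem _ _ ha
    have hBinv : ∀ x ∈ W, p.B x ∈ W := by
      intro x hx
      refine Submodule.span_induction ?_ ?_ ?_ ?_ hx
      · intro z hz
        obtain ⟨h, hh, rfl⟩ := Finset.mem_image.mp (Finset.mem_coe.mp hz)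
        simp only [Finset.mem_Icc] at hh
        rcases Nat.eq_or_lt_of_le hh.1 with hhm | hhm
        · -- h = m
          obtain rfl : h = m := hhm.symm
          rcases Nat.eq_zero_or_pos m with hm0 | hm0
          · have hw0 : w 0 = u := by simp [hwdef, TridiagonalPair.tau_zero]
            rw [hm0, hw0, p.B_apply (Nat.zero_le _) hu, ← hw0, ← hm0]
            exact Submodule.smul_mem _ _ (hgen m (le_refl _) hmd)
          · obtain ⟨n, hn⟩ : ∃ n, m = n + 1 := ⟨m - 1, by omega⟩
            have hcn : c n = 0 := hmmin n (by omega)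
            have hthis := hcas n (by omega) u hu
            rw [hcn, mul_zero, zero_smul] at hthis
            have hcm' : c (n+1) ≠ 0 := by rw [← hn]; exact hcm
            have hBw : p.B (w (n+1)) = p.θ' (n+1) • w (n+1) := by
              rcases smul_eq_zero.mp hthis with h' | h'
              · exact absurd h' hcm'
              · exact sub_eq_zero.mp h'
            rw [hn, hBw]
            exact Submodule.smul_mem _ _ (hgen (n+1) (by omega) (by omega))
        · -- m < h
          obtain ⟨n, rfl⟩ : ∃ n, h = n + 1 := ⟨h - 1, by omega⟩
          have := hcas n (by omega) u hu
          have hcn1 : c (n+1) ≠ 0 := hup (n+1) (by omega) (by omega)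
          have hBw : p.B (w (n+1))
              = p.θ' (n+1) • w (n+1) + (c (n+1))⁻¹ • (((p.θ' p.d - p.θ' n) * c n) • w n) := by
            have h2 : p.B (w (n+1)) - p.θ' (n+1) • w (n+1)
                = (c (n+1))⁻¹ • (((p.θ' p.d - p.θ' n) * c n) • w n) := by
              rw [← this, smul_smul, inv_mul_cancel₀ hcn1, one_smul]
            rw [← h2]
            abel
          rw [hBw]
          refine Submodule.add_mem _ (Submodule.smul_mem _ _ (hgen (n+1) hh.1 hh.2)) ?_
          exact Submodule.smul_mem _ _ (Submodule.smul_mem _ _ (hgen n (by omega) (by omega)))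
      · simp
      · intro a b _ _ ha hb
        rw [map_add]; exact Submodule.add_mem _ ha hb
      · intro t a _ ha
        rw [map_smul]; exact Submodule.smul_mem _ _ ha
    have hWtop : W = ⊤ := by
      rcases p.hIrr W hAinv hBinv with h | h
      · exfalso
        apply hwm
        have : w m ∈ W := hgen m (le_refl _) hmd
        rw [h] at this
        simpa using this
      · exact h
    have hupbd : Module.finrank K V ≤ p.d + 1 := by
      have h1 : Module.finrank K ↥(Submodule.span K (S : Set V)) ≤ S.card :=
        finrank_span_finset_le_card S
      rw [← hW, hWtop] at h1
      have h2 : S.card ≤ p.d + 1 := by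
        refine le_trans Finset.card_image_le ?_
        rw [Nat.card_Icc]
        omega
      have h3 : Module.finrank K ↥(⊤ : Submodule K V) = Module.finrank K V :=
        finrank_top K V
      omega
    omega
  · -- Case II: some τ_e(A) vanishes on V*_0 — contradiction.
    exfalso
    push_neg at hall
    obtain ⟨e, he, hez⟩ := hall
    have hd0 : ∀ u ∈ p.Ew 0, (aeval p.A (tau p.θ p.d)) u = 0 := by
      intro u hu
      have hfac : tau p.θ p.d = (∏ k ∈ Finset.Ico e p.d, (Polynomial.X - Polynomial.C (p.θ k))) * tau p.θ e := by
        rw [tau, tau, mul_comm, Finset.prod_range_mul_prod_Ico _ he]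
      rw [hfac, map_mul, Module.End.mul_apply, hez u hu, map_zero]
    have hEwH : p.Ew 0 ≤ p.Hh p.d := by
      intro u hu
      have hu' : u ∈ p.Hh p.d ⊔ p.Ev p.d := by
        have hsplit : p.Gg 0 = p.Hh p.d ⊔ p.Ev p.d := by
          rw [TridiagonalPair.Gg, TridiagonalPair.Hh,
            show Finset.Icc 0 p.d = insert p.d (Finset.range p.d) by
              ext x
              simp only [Finset.mem_Icc, Finset.mem_insert, Finset.mem_range]
              omega]
          rw [Finset.sup_insert]
          rw [sup_comm]
        rw [← hsplit, p.Gg_zero]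
        trivial
      obtain ⟨x, hxH, v, hvE, hxv⟩ := Submodule.mem_sup.mp hu'
      have h0 := hd0 u hu
      rw [← hxv, map_add] at h0
      have hax : (aeval p.A (tau p.θ p.d)) x ∈ p.Hh p.d := p.tau_Hh hxH p.d
      have hav : (aeval p.A (tau p.θ p.d)) v
          = (∏ k ∈ Finset.range p.d, (p.θ p.d - p.θ k)) • v :=
        p.tau_eigen (le_refl _) hvE p.d
      have hcd : (∏ k ∈ Finset.range p.d, (p.θ p.d - p.θ k)) ≠ 0 := by
        refine Finset.prod_ne_zero_iff.mpr ?_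
        intro k hk hz
        simp only [Finset.mem_range] at hk
        have := p.hθ_inj p.d (le_refl _) k (by omega) (sub_eq_zero.mp hz)
        omega
      have hvH : v ∈ p.Hh p.d := by
        have : (∏ k ∈ Finset.range p.d, (p.θ p.d - p.θ k)) • v
            = -(aeval p.A (tau p.θ p.d)) x := by
          rw [← hav]
          exact eq_neg_of_add_eq_zero_right h0
        have hmem : (∏ k ∈ Finset.range p.d, (p.θ p.d - p.θ k)) • v ∈ p.Hh p.d := by
          rw [this]; exact Submodule.neg_mem _ hax
        have := Submodule.smul_mem _ (∏ k ∈ Finset.range p.d, (p.θ p.d - p.θ k))⁻¹ hmem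
        rwa [smul_smul, inv_mul_cancel₀ hcd, one_smul] at this
      rw [← hxv]
      exact Submodule.add_mem _ hxH hvH
    have hbot : p.Ew 0 = ⊥ := by
      rw [← p.Z3]
      exact le_antisymm (le_inf (le_refl _) hEwH) inf_le_left
    exact p.hEw_ne 0 (Nat.zero_le _) hbot
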